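/- Let A be a left R-module with projective presentation σ_A, B a left S-module with projective presentation σ_B, and σ the induced projective presentation of (0,B) ⊕ (A,FA) in (F, S-Mod). Assume F commutes with direct sums. Then the object (A, FA ⊕ B) with structure map (1,0): FA → FA ⊕ B (which is isomorphic to (A,FA) ⊕ (0,B)) is silting with respect to σ if and only if: (1) A is silting with respect to σ_A; (2) B is silting with respect to σ_B; and (3) FA ∈ Gen B. -/

import Mathlib

open CategoryTheory CategoryTheory.Limits

universe v u

section Generic

variable {𝒜 : Type*} [Category.{v} 𝒜]

/-- For a morphism `σ : P₁ ⟶ P₀`, the class `D_σ` of objects `X` such that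
`Hom(σ, X)` is surjective. -/
def Dclass {P₁ P₀ : 𝒜} (σ : P₁ ⟶ P₀) : Set 𝒜 :=
  {X | ∀ g : P₁ ⟶ X, ∃ h : P₀ ⟶ X, σ ≫ h = g}

/-- `Gen T` is the class of objects admitting an epimorphism from a coproduct (direct sum)
of copies of `T`. -/
def Gen (T : 𝒜) : Set 𝒜 :=
  {X | ∃ (ι : Type v) (c : Cofan (fun _ : ι => T)) (_ : IsColimit c) (f : c.pt ⟶ X), Epi f}

variable [HasZeroMorphisms 𝒜]

/-- A projective presentation `P₁ → P₀ → T → 0` of an object `T`. -/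
structure ProjPres (T : 𝒜) where
  P₁ : 𝒜
  P₀ : 𝒜
  σ : P₁ ⟶ P₀
  π : P₀ ⟶ T
  projective₁ : Projective P₁
  projective₀ : Projective P₀
  epi : Epi π
  w : σ ≫ π = 0
  exact : (ShortComplex.mk σ π w).Exact

/-- A class of objects is a torsion class if it is closed under (epimorphic) images,
direct sums (coproducts) and extensions. -/
def IsTorsionClass (𝒞 : Set 𝒜) : Prop :=
  (∀ ⦃X Y : 𝒜⦄ (f : X ⟶ Y), Epi f → X ∈ 𝒞 → Y ∈ 𝒞) ∧
  (∀ (ι : Type v) (Xs : ι → 𝒜) (c : Cofan Xs), IsColimit c → (∀ i, Xs i ∈ 𝒞) → c.pt ∈ 𝒞) ∧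
  (∀ (E : ShortComplex 𝒜), E.ShortExact → E.X₁ ∈ 𝒞 → E.X₃ ∈ 𝒞 → E.X₂ ∈ 𝒞)

/-- `T` is a silting object (with respect to some projective presentation) if it admits a
projective presentation `σ` with `D_σ = Gen T`. -/
def IsSilting (T : 𝒜) : Prop :=
  ∃ p : ProjPres T, Dclass p.σ = Gen T

/-- `T` is a partial silting object if it admits a projective presentation `σ` such that
`D_σ` is a torsion class and `T ∈ D_σ`. -/
def IsPartialSilting (T : 𝒜) : Prop :=
  ∃ p : ProjPres T, IsTorsionClass (Dclass p.σ) ∧ T ∈ Dclass p.σ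

end Generic

section CommaZero

variable {𝒜 : Type*} [Category 𝒜] {ℬ : Type*} [Category ℬ]
  [Preadditive 𝒜] [Preadditive ℬ] (F : 𝒜 ⥤ ℬ) [F.Additive]

instance : HasZeroMorphisms (Comma F (𝟭 ℬ)) where
  zero X Y := ⟨{ left := 0, right := 0, w := by simp }⟩
  comp_zero {X Y} f Z := by
    apply CommaMorphism.ext
    · show f.left ≫ 0 = 0
      simp
    · show f.right ≫ 0 = 0
      simp
  zero_comp X {Y Z} f := by
    apply CommaMorphism.ext
    · show 0 ≫ f.left = 0
      simp
    · show 0 ≫ f.right = 0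
      simp

end CommaZero

section ModComma

variable {R S : Type u} [Ring R] [Ring S]
  (F : ModuleCat.{u} R ⥤ ModuleCat.{u} S) [F.Additive]

/-- The object `(P, FP ⊕ Q)` of the comma category `(F, S-Mod)`, with structure map
`(1,0) : FP ⟶ FP ⊕ Q`; it is isomorphic to `(P, FP) ⊕ (0, Q)`. -/
def pairObj (P : ModuleCat.{u} R) (Q : ModuleCat.{u} S) :
    Comma F (𝟭 (ModuleCat.{u} S)) where
  left := P
  right := ModuleCat.of S (F.obj P × Q)
  hom := ModuleCat.ofHom (LinearMap.inl S (F.obj P) Q)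

/-- The morphism `(a, Fa ⊕ b) : (P₁, FP₁ ⊕ Q₁) ⟶ (P₀, FP₀ ⊕ Q₀)` in the comma
category `(F, S-Mod)`.  When `a = σ_A`, `b = σ_B` are projective presentations of `A` and
`B`, this is the induced projective presentation `σ` of `(0,B) ⊕ (A, FA)`. -/
def pairMap {P₁ P₀ : ModuleCat.{u} R} {Q₁ Q₀ : ModuleCat.{u} S}
    (a : P₁ ⟶ P₀) (b : Q₁ ⟶ Q₀) : pairObj F P₁ Q₁ ⟶ pairObj F P₀ Q₀ where
  left := a
  right := ModuleCat.ofHom (LinearMap.prodMap (F.map a).hom b.hom)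
  w := by
    apply ModuleCat.hom_ext
    apply LinearMap.ext
    intro x
    show ((LinearMap.inl S (F.obj P₀) Q₀).comp (F.map a).hom) x
        = ((LinearMap.prodMap (F.map a).hom b.hom).comp (LinearMap.inl S (F.obj P₁) Q₁)) x
    simp
    exact Prod.ext rfl (map_zero (ModuleCat.Hom.hom b)).symm

/-- The object `(M, 0)` of the comma category. -/
def leftObj (M : ModuleCat.{u} R) : Comma F (𝟭 (ModuleCat.{u} S)) where
  left := M
  right := ModuleCat.of S PUnit
  hom := 0

/-- The object `(0, N)` of the comma category. -/
def rightObj (N : ModuleCat.{u} S) : Comma F (𝟭 (ModuleCat.{u} S)) where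
  left := ModuleCat.of R PUnit
  right := N
  hom := 0

/-- The object `(M, FM)` of the comma category, with the identity structure map. -/
def diagObj (M : ModuleCat.{u} R) : Comma F (𝟭 (ModuleCat.{u} S)) where
  left := M
  right := F.obj M
  hom := 𝟙 (F.obj M)

end ModComma

section ModuleHelpers

variable {S' : Type u} [Ring S']

theorem range_lsum {ι : Type*} {M N : Type u} [AddCommGroup M] [Module S' M]
    [AddCommGroup N] [Module S' N] (f : ι → (M →ₗ[S'] N)) :
    LinearMap.range (Finsupp.lsum ℕ f) = ⨆ i, LinearMap.range (f i) := by
  apply le_antisymm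
  · rintro x ⟨d, rfl⟩
    rw [Finsupp.lsum_apply, Finsupp.sum]
    exact Submodule.sum_mem _ fun i _ =>
      Submodule.mem_iSup_of_mem i (LinearMap.mem_range_self _ _)
  · refine iSup_le fun i => ?_
    rintro x ⟨m, rfl⟩
    exact ⟨Finsupp.single i m, Finsupp.lsum_single _ _ _ _⟩

theorem range_eq_iSup_lsingle {ι : Type*} {M N : Type u} [AddCommGroup M] [Module S' M]
    [AddCommGroup N] [Module S' N] (m : (ι →₀ M) →ₗ[S'] N) :
    LinearMap.range m = ⨆ i, LinearMap.range (m ∘ₗ Finsupp.lsingle i) := by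
  have hm : m = Finsupp.lsum ℕ (fun i => m ∘ₗ Finsupp.lsingle i) :=
    Finsupp.lhom_ext fun a b => by simp
  conv_lhs => rw [hm]
  exact range_lsum _

theorem range_prod_eq {M N P : Type u} [AddCommGroup M] [Module S' M] [AddCommGroup N]
    [Module S' N] [AddCommGroup P] [Module S' P] (ν : M × N →ₗ[S'] P) :
    LinearMap.range ν = LinearMap.range (ν ∘ₗ LinearMap.inl S' M N) ⊔
      LinearMap.range (ν ∘ₗ LinearMap.inr S' M N) := by
  rw [← LinearMap.range_coprod]
  congr 1
  rw [← LinearMap.comp_coprod, LinearMap.coprod_inl_inr, LinearMap.comp_id]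

theorem submodule_eq_top_of_subsingleton {M : Type u} [AddCommGroup M] [Module S' M]
    (hM : Subsingleton M) (N : Submodule S' M) : N = ⊤ :=
  Submodule.eq_top_iff'.mpr fun x => by rw [@Subsingleton.elim M hM x 0]; exact N.zero_mem

/-- The cofan on `ι →₀ M` given by the single-inclusions. -/
noncomputable def finsuppCofan (ι : Type u) (M : ModuleCat.{u} S') : Cofan (fun _ : ι => M) :=
  Cofan.mk (ModuleCat.of S' (ι →₀ M)) fun i =>
    ModuleCat.ofHom (Finsupp.lsingle i : M →ₗ[S'] (ι →₀ M))

/-- The finsupp cofan is a coproduct. -/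
noncomputable def finsuppCofanIsColimit (ι : Type u) (M : ModuleCat.{u} S') :
    IsColimit (finsuppCofan ι M) :=
  mkCofanColimit _
    (fun t => ModuleCat.ofHom (Finsupp.lsum ℕ (fun i => (t.inj i).hom) : (ι →₀ M) →ₗ[S'] t.pt))
    (fun t i => by
      apply ModuleCat.hom_ext
      show ((Finsupp.lsum ℕ (fun i => (t.inj i).hom) : (ι →₀ M) →ₗ[S'] t.pt)
        ∘ₗ Finsupp.lsingle i) = (t.inj i).hom
      exact Finsupp.lsum_comp_lsingle ℕ _ _)
    (fun t m h => by
      apply ModuleCat.hom_ext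
      show m.hom = (Finsupp.lsum ℕ (fun i => (t.inj i).hom) : (ι →₀ M) →ₗ[S'] t.pt)
      refine Finsupp.lhom_ext' fun i => ?_
      rw [Finsupp.lsum_comp_lsingle]
      exact congrArg ModuleCat.Hom.hom (h i))

theorem iSup_range_cocone_eq_top {ι : Type u} {D : Discrete ι ⥤ ModuleCat.{u} S'}
    (c : Cocone D) (hc : IsColimit c) (g : ∀ i : ι, D.obj ⟨i⟩ ⟶ c.pt)
    (hg : ∀ i, g i = c.ι.app ⟨i⟩) :
    ⨆ i : ι, LinearMap.range (g i).hom = ⊤ := by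
  set N := ⨆ i : ι, LinearMap.range (g i).hom with hN
  have h0 : ModuleCat.ofHom N.mkQ = (0 : c.pt ⟶ ModuleCat.of S' (c.pt ⧸ N)) := by
    apply hc.hom_ext
    rintro ⟨i⟩
    rw [← hg i]
    apply ModuleCat.hom_ext
    apply LinearMap.ext; intro x
    show N.mkQ ((g i).hom x) = 0
    rw [Submodule.mkQ_apply, Submodule.Quotient.mk_eq_zero]
    exact Submodule.mem_iSup_of_mem i (LinearMap.mem_range_self _ _)
  refine Submodule.eq_top_iff'.mpr fun x => ?_
  rw [← Submodule.Quotient.mk_eq_zero, ← Submodule.mkQ_apply]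
  exact LinearMap.congr_fun (congrArg ModuleCat.Hom.hom h0) x

theorem mem_gen_iff {M X : ModuleCat.{u} S'} :
    X ∈ Gen M ↔ ∃ (ι : Type u) (g : ι → (M ⟶ X)), ⨆ i, LinearMap.range (g i).hom = ⊤ := by
  constructor
  · rintro ⟨ι, c, hc, f, hf⟩
    refine ⟨ι, fun i => c.inj i ≫ f, ?_⟩
    have hsurj : Function.Surjective f.hom := (ModuleCat.epi_iff_surjective f).mp hf
    have htop := iSup_range_cocone_eq_top c hc (fun i => c.inj i) (fun i => rfl)
    have hcomp : ∀ i, LinearMap.range ((c.inj i ≫ f : M ⟶ X)).hom =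
        Submodule.map f.hom (LinearMap.range (c.inj i).hom) := fun i => LinearMap.range_comp _ _
    calc ⨆ i, LinearMap.range ((c.inj i ≫ f : M ⟶ X)).hom
        = ⨆ i, Submodule.map f.hom (LinearMap.range (c.inj i).hom) := iSup_congr hcomp
      _ = Submodule.map f.hom (⨆ i, LinearMap.range (c.inj i).hom) :=
        (Submodule.map_iSup _ _).symm
      _ = ⊤ := by rw [htop, Submodule.map_top, LinearMap.range_eq_top]; exact hsurj
  · rintro ⟨ι, g, hg⟩
    refine ⟨ι, finsuppCofan ι M, finsuppCofanIsColimit ι M,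
      ModuleCat.ofHom (Finsupp.lsum ℕ (fun i => (g i).hom) : (ι →₀ M) →ₗ[S'] X), ?_⟩
    apply (ModuleCat.epi_iff_surjective _).mpr
    show Function.Surjective (Finsupp.lsum ℕ (fun i => (g i).hom) : (ι →₀ M) →ₗ[S'] X)
    rw [← LinearMap.range_eq_top]
    rw [show LinearMap.range ((Finsupp.lsum ℕ (fun i => (g i).hom) :
      (ι →₀ M) →ₗ[S'] X)) = ⨆ i, LinearMap.range (g i).hom from range_lsum _]
    exact hg

theorem subsingleton_mem_Dclass {Q₁ Q₀ : ModuleCat.{u} S'} (b : Q₁ ⟶ Q₀)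
    (T : ModuleCat.{u} S') (hT : Subsingleton T) : T ∈ Dclass b :=
  fun _ => ⟨0, ModuleCat.hom_ext (LinearMap.ext fun _ => @Subsingleton.elim T hT _ _)⟩

end ModuleHelpers

section CommaHelpers

variable {R S : Type u} [Ring R] [Ring S]
  (F : ModuleCat.{u} R ⥤ ModuleCat.{u} S) [F.Additive]

/-- The structure map of a comma object, as a plain linear map. -/
def commaHom (Z : Comma F (𝟭 (ModuleCat.{u} S))) : F.obj Z.left →ₗ[S] Z.right := Z.hom.hom

/-- Construct a morphism out of `pairObj F A B` from its two "coordinates". -/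
def pairHom {A : ModuleCat.{u} R} {B : ModuleCat.{u} S} (Z : Comma F (𝟭 (ModuleCat.{u} S)))
    (f : A ⟶ Z.left) (h : B ⟶ Z.right) : pairObj F A B ⟶ Z where
  left := f
  right := ModuleCat.ofHom (LinearMap.coprod (commaHom F Z ∘ₗ (F.map f).hom) h.hom)
  w := by
    apply ModuleCat.hom_ext
    refine LinearMap.ext fun u => ?_
    show commaHom F Z ((F.map f).hom u)
      = LinearMap.coprod (commaHom F Z ∘ₗ (F.map f).hom) h.hom (u, 0)
    simp [commaHom]
    rfl

theorem comma_hom_w_apply {Z₁ Z₂ : Comma F (𝟭 (ModuleCat.{u} S))} (n : Z₁ ⟶ Z₂)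
    (x : F.obj Z₁.left) :
    commaHom F Z₂ ((F.map n.left).hom x)
      = n.right.hom (commaHom F Z₁ x) :=
  LinearMap.congr_fun (congrArg ModuleCat.Hom.hom n.w) x

theorem comma_epi_iff {Z₁ Z₂ : Comma F (𝟭 (ModuleCat.{u} S))} (m : Z₁ ⟶ Z₂) :
    Epi m ↔ Function.Surjective m.left.hom ∧
      LinearMap.range (commaHom F Z₂) ⊔ LinearMap.range m.right.hom = ⊤ := by
  constructor
  · intro hm
    constructor
    · set N : Submodule R Z₂.left := LinearMap.range m.left.hom with hNdef
      let W : Comma F (𝟭 (ModuleCat.{u} S)) :=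
        { left := ModuleCat.of R (Z₂.left ⧸ N)
          right := ModuleCat.of S PUnit
          hom := 0 }
      let φ : Z₂ ⟶ W :=
        { left := ModuleCat.ofHom N.mkQ
          right := 0
          w := ModuleCat.hom_ext (LinearMap.ext fun _ =>
            @Subsingleton.elim _ (inferInstanceAs (Subsingleton PUnit)) _ _) }
      have h1 : m ≫ φ = m ≫ 0 := by
        rw [comp_zero]
        apply CommaMorphism.ext
        · apply ModuleCat.hom_ext; apply LinearMap.ext; intro x
          show N.mkQ (m.left.hom x) = 0
          rw [Submodule.mkQ_apply, Submodule.Quotient.mk_eq_zero]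
          exact LinearMap.mem_range_self _ _
        · apply ModuleCat.hom_ext; apply LinearMap.ext; intro x
          exact @Subsingleton.elim _ (inferInstanceAs (Subsingleton PUnit)) _ _
      have hφ : φ = 0 := (cancel_epi m).mp h1
      intro y
      have h3 : N.mkQ y = 0 :=
        LinearMap.congr_fun (congrArg ModuleCat.Hom.hom (congrArg CommaMorphism.left hφ)) y
      rw [Submodule.mkQ_apply, Submodule.Quotient.mk_eq_zero] at h3
      exact h3
    · set N : Submodule S Z₂.right :=
        LinearMap.range (commaHom F Z₂) ⊔ LinearMap.range m.right.hom
        with hNdef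
      let W : Comma F (𝟭 (ModuleCat.{u} S)) :=
        { left := ModuleCat.of R PUnit
          right := ModuleCat.of S (Z₂.right ⧸ N)
          hom := 0 }
      let ψ : Z₂ ⟶ W :=
        { left := 0
          right := ModuleCat.ofHom N.mkQ
          w := by
            apply ModuleCat.hom_ext; apply LinearMap.ext; intro x
            show (0 : F.obj (ModuleCat.of R PUnit) →ₗ[S] (Z₂.right ⧸ N)) ((F.map 0).hom x)
              = N.mkQ (commaHom F Z₂ x)
            rw [LinearMap.zero_apply]
            symm
            rw [Submodule.mkQ_apply, Submodule.Quotient.mk_eq_zero]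
            exact Submodule.mem_sup_left (LinearMap.mem_range_self _ _) }
      have h1 : m ≫ ψ = m ≫ 0 := by
        rw [comp_zero]
        apply CommaMorphism.ext
        · apply ModuleCat.hom_ext; apply LinearMap.ext; intro x
          exact @Subsingleton.elim _ (inferInstanceAs (Subsingleton PUnit)) _ _
        · apply ModuleCat.hom_ext; apply LinearMap.ext; intro x
          show N.mkQ (m.right.hom x) = 0
          rw [Submodule.mkQ_apply, Submodule.Quotient.mk_eq_zero]
          exact Submodule.mem_sup_right (LinearMap.mem_range_self _ _)
      have hψ : ψ = 0 := (cancel_epi m).mp h1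
      refine Submodule.eq_top_iff'.mpr fun y => ?_
      rw [← Submodule.Quotient.mk_eq_zero, ← Submodule.mkQ_apply]
      exact LinearMap.congr_fun (congrArg ModuleCat.Hom.hom (congrArg CommaMorphism.right hψ)) y
  · rintro ⟨hl, hsup⟩
    constructor
    intro W n n' hnn
    have hleft : n.left = n'.left := by
      apply ModuleCat.hom_ext; apply LinearMap.ext; intro y
      obtain ⟨x, rfl⟩ := hl y
      exact LinearMap.congr_fun (congrArg ModuleCat.Hom.hom (congrArg CommaMorphism.left hnn)) x
    apply CommaMorphism.ext
    · exact hleft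
    · apply ModuleCat.hom_ext; apply LinearMap.ext; intro y
      have hy : y ∈ LinearMap.range (commaHom F Z₂) ⊔
          LinearMap.range m.right.hom := hsup ▸ Submodule.mem_top
      obtain ⟨a, ⟨u, rfl⟩, b, ⟨v, rfl⟩, rfl⟩ := Submodule.mem_sup.mp hy
      rw [map_add, map_add]
      congr 1
      · calc n.right.hom (commaHom F Z₂ u)
            = commaHom F W ((F.map n.left).hom u) :=
              (comma_hom_w_apply F n u).symm
          _ = commaHom F W ((F.map n'.left).hom u) := by rw [hleft]
          _ = n'.right.hom (commaHom F Z₂ u) :=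
              comma_hom_w_apply F n' u
      · exact LinearMap.congr_fun (congrArg ModuleCat.Hom.hom (congrArg CommaMorphism.right hnn)) v

variable [∀ J : Type u, PreservesColimitsOfShape (Discrete J) F]

noncomputable section

/-- Inclusion of `F A` into the `i`-th summand of `ι →₀ (F A × B)`. -/
def inlsingle (A : ModuleCat.{u} R) (B : ModuleCat.{u} S) {ι : Type u} (i : ι) :
    F.obj A ⟶ ModuleCat.of S (ι →₀ (F.obj A × B)) :=
  ModuleCat.ofHom ((Finsupp.lsingle i : (F.obj A × B) →ₗ[S] (ι →₀ (F.obj A × B))) ∘ₗ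
    LinearMap.inl S (F.obj A) B)

/-- The coproduct of `ι` copies of `pairObj F A B` in the comma category. -/
noncomputable def commaPt (A : ModuleCat.{u} R) (B : ModuleCat.{u} S) (ι : Type u) :
    Comma F (𝟭 (ModuleCat.{u} S)) where
  left := ModuleCat.of R (ι →₀ A)
  right := ModuleCat.of S (ι →₀ (F.obj A × B))
  hom := (isColimitOfPreserves F (finsuppCofanIsColimit ι A)).desc
    { pt := ModuleCat.of S (ι →₀ (F.obj A × B))
      ι := Discrete.natTrans fun i => inlsingle F A B i.as }

theorem commaPt_fac (A : ModuleCat.{u} R) (B : ModuleCat.{u} S) {ι : Type u} (i : ι) :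
    F.map (ModuleCat.ofHom (Finsupp.lsingle i) : A ⟶ ModuleCat.of R (ι →₀ A)) ≫ (commaPt F A B ι).hom
      = inlsingle F A B i :=
  (isColimitOfPreserves F (finsuppCofanIsColimit ι A)).fac
    { pt := ModuleCat.of S (ι →₀ (F.obj A × B))
      ι := Discrete.natTrans fun i => inlsingle F A B i.as } ⟨i⟩

/-- The cofan exhibiting `commaPt` as a coproduct of copies of `pairObj F A B`. -/
noncomputable def commaCofan (A : ModuleCat.{u} R) (B : ModuleCat.{u} S) (ι : Type u) :
    Cofan (fun _ : ι => pairObj F A B) :=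
  Cofan.mk (commaPt F A B ι) fun i =>
    { left := (ModuleCat.ofHom (Finsupp.lsingle i) : A ⟶ ModuleCat.of R (ι →₀ A))
      right := (ModuleCat.ofHom (Finsupp.lsingle i) :
        (pairObj F A B).right ⟶ (commaPt F A B ι).right)
      w := by exact commaPt_fac F A B i }

noncomputable def commaCofanIsColimit (A : ModuleCat.{u} R) (B : ModuleCat.{u} S)
    (ι : Type u) : IsColimit (commaCofan F A B ι) :=
  mkCofanColimit _
    (fun t =>
      { left := ModuleCat.ofHom (Finsupp.lsum ℕ (fun i => (t.inj i).left.hom) :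
          (ι →₀ A) →ₗ[R] t.pt.left)
        right := ModuleCat.ofHom (Finsupp.lsum ℕ
          (fun i => (t.inj i).right.hom) :
          (ι →₀ (F.obj A × B)) →ₗ[S] t.pt.right)
        w := by
          apply (isColimitOfPreserves F (finsuppCofanIsColimit ι A)).hom_ext
          rintro ⟨i⟩
          apply ModuleCat.hom_ext; apply LinearMap.ext; intro u
          have hc : (ModuleCat.ofHom (Finsupp.lsingle i) : A ⟶ ModuleCat.of R (ι →₀ A)) ≫
              ModuleCat.ofHom (Finsupp.lsum ℕ (fun i => (t.inj i).left.hom) :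
                (ι →₀ A) →ₗ[R] t.pt.left) = (t.inj i).left :=
            ModuleCat.hom_ext (Finsupp.lsum_comp_lsingle ℕ _ _)
          have e1 := LinearMap.congr_fun
            (congrArg ModuleCat.Hom.hom ((F.map_comp _ _).symm.trans (congrArg F.map hc))) u
          have e2 := LinearMap.congr_fun (congrArg ModuleCat.Hom.hom (commaPt_fac F A B i)) u
          have e3 := LinearMap.congr_fun (congrArg ModuleCat.Hom.hom (t.inj i).w) u
          calc _ = t.pt.hom.hom ((F.map (t.inj i).left).hom u) := congrArg t.pt.hom.hom e1
            _ = (t.inj i).right.hom ((u, 0) : F.obj A × B) := e3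
            _ = (Finsupp.lsum ℕ (fun i => (t.inj i).right.hom))
                (Finsupp.single i ((u, 0) : F.obj A × B)) :=
                (Finsupp.lsum_single ℕ (fun i => (t.inj i).right.hom) i ((u, 0) : F.obj A × B)).symm
            _ = _ := (congrArg (Finsupp.lsum ℕ (fun i => (t.inj i).right.hom)) e2).symm })
    (fun t i => by
      apply CommaMorphism.ext
      · apply ModuleCat.hom_ext; exact Finsupp.lsum_comp_lsingle ℕ _ _
      · apply ModuleCat.hom_ext; exact Finsupp.lsum_comp_lsingle ℕ _ _)
    (fun t m h => by
      apply CommaMorphism.ext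
      · apply ModuleCat.hom_ext
        show m.left.hom = (Finsupp.lsum ℕ (fun i => (t.inj i).left.hom) :
          (ι →₀ A) →ₗ[R] t.pt.left)
        refine Finsupp.lhom_ext' fun i => ?_
        exact (congrArg ModuleCat.Hom.hom (congrArg CommaMorphism.left (h i))).trans
          (Finsupp.lsum_comp_lsingle ℕ (fun i => (t.inj i).left.hom) i).symm
      · apply ModuleCat.hom_ext
        show m.right.hom = (Finsupp.lsum ℕ
          (fun i => (t.inj i).right.hom) :
          (ι →₀ (F.obj A × B)) →ₗ[S] t.pt.right)
        refine Finsupp.lhom_ext' fun i => ?_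
        exact (congrArg ModuleCat.Hom.hom (congrArg CommaMorphism.right (h i))).trans
          (Finsupp.lsum_comp_lsingle ℕ (fun i => (t.inj i).right.hom) i).symm)

theorem mem_gen_pairObj_iff {A : ModuleCat.{u} R} {B : ModuleCat.{u} S}
    (Z : Comma F (𝟭 (ModuleCat.{u} S))) :
    Z ∈ Gen (pairObj F A B) ↔
      ((∃ (ι : Type u) (g : ι → (A ⟶ Z.left)), ⨆ i, LinearMap.range (g i).hom = ⊤) ∧
       (∃ (κ : Type u) (r : κ → (B ⟶ Z.right)),
         LinearMap.range (commaHom F Z) ⊔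
           ⨆ k, LinearMap.range (r k).hom = ⊤)) := by
  constructor
  · rintro ⟨J, c, hc, f, hf⟩
    haveI := hf
    let e : (commaCofan F A B J).pt ≅ c.pt :=
      (commaCofanIsColimit F A B J).coconePointUniqueUpToIso hc
    let μ : commaPt F A B J ⟶ Z := e.hom ≫ f
    have hμ : Epi μ := @epi_comp _ _ _ _ _ e.hom (@IsIso.epi_of_iso _ _ _ _ e.hom (Iso.isIso_hom e)) f hf
    obtain ⟨hl, hsup⟩ := (comma_epi_iff F μ).mp hμ
    constructor
    · refine ⟨J, fun j => ModuleCat.ofHom (μ.left.hom ∘ₗ Finsupp.lsingle j), ?_⟩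
      show ⨆ j, LinearMap.range (μ.left.hom ∘ₗ Finsupp.lsingle j) = ⊤
      exact (range_eq_iSup_lsingle μ.left.hom).symm.trans (LinearMap.range_eq_top.mpr hl)
    · refine ⟨J, fun j => ModuleCat.ofHom
        ((μ.right.hom ∘ₗ Finsupp.lsingle j) ∘ₗ LinearMap.inr S (F.obj A) B), ?_⟩
      have hj : ∀ j : J, LinearMap.range ((μ.right.hom ∘ₗ Finsupp.lsingle j) ∘ₗ
          LinearMap.inl S (F.obj A) B) ≤
          LinearMap.range (commaHom F Z) := by
        intro j
        rintro y ⟨u, rfl⟩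
        refine ⟨(F.map μ.left).hom ((F.map (ModuleCat.ofHom (Finsupp.lsingle j) :
          A ⟶ ModuleCat.of R (J →₀ A))).hom u), ?_⟩
        have e2 : commaHom F (commaPt F A B J)
            ((F.map (ModuleCat.ofHom (Finsupp.lsingle j) : A ⟶ ModuleCat.of R (J →₀ A))).hom u)
            = (inlsingle F A B j).hom u :=
          LinearMap.congr_fun (congrArg ModuleCat.Hom.hom (commaPt_fac F A B j)) u
        have e3 : commaHom F Z
            ((F.map μ.left).hom ((F.map (ModuleCat.ofHom (Finsupp.lsingle j) :
              A ⟶ ModuleCat.of R (J →₀ A))).hom u))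
            = μ.right.hom (commaHom F (commaPt F A B J)
              ((F.map (ModuleCat.ofHom (Finsupp.lsingle j) :
                A ⟶ ModuleCat.of R (J →₀ A))).hom u)) :=
          comma_hom_w_apply F μ ((F.map (ModuleCat.ofHom (Finsupp.lsingle j) :
            A ⟶ ModuleCat.of R (J →₀ A))).hom u)
        exact e3.trans (congrArg μ.right.hom e2)
      have hμr : LinearMap.range μ.right.hom
          = ⨆ j, LinearMap.range (μ.right.hom ∘ₗ Finsupp.lsingle j) :=
        range_eq_iSup_lsingle _
      rw [eq_top_iff, ← hsup]
      refine sup_le le_sup_left ?_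
      rw [hμr]
      refine iSup_le fun j => ?_
      rw [range_prod_eq (μ.right.hom ∘ₗ Finsupp.lsingle j)]
      refine sup_le ((hj j).trans le_sup_left) ?_
      exact le_sup_of_le_right (le_iSup (fun j => LinearMap.range
        ((μ.right.hom ∘ₗ Finsupp.lsingle j) ∘ₗ LinearMap.inr S (F.obj A) B)) j)
  · rintro ⟨⟨ι, g, hg⟩, ⟨κ, r, hr⟩⟩
    let comp : ∀ j : ι ⊕ κ, pairObj F A B ⟶ Z := fun j =>
      Sum.rec (fun i => pairHom F Z (g i) 0) (fun k => pairHom F Z 0 (r k)) j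
    let μ : (commaCofan F A B (ι ⊕ κ)).pt ⟶ Z :=
      Cofan.IsColimit.desc (commaCofanIsColimit F A B (ι ⊕ κ)) comp
    have hfac : ∀ j, (commaCofan F A B (ι ⊕ κ)).inj j ≫ μ = comp j := fun j =>
      Cofan.IsColimit.fac _ _ _
    have hlft : ∀ j, μ.left.hom ∘ₗ Finsupp.lsingle j = (comp j).left.hom := fun j =>
      congrArg ModuleCat.Hom.hom (congrArg CommaMorphism.left (hfac j))
    have hrgt : ∀ j, μ.right.hom ∘ₗ Finsupp.lsingle j = (comp j).right.hom := fun j =>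
      congrArg ModuleCat.Hom.hom (congrArg CommaMorphism.right (hfac j))
    have hepi : Epi μ := by
      rw [comma_epi_iff]
      constructor
      · rw [← LinearMap.range_eq_top]
        refine (range_eq_iSup_lsingle μ.left.hom).trans ?_
        rw [eq_top_iff, ← hg]
        refine iSup_le fun i => ?_
        have e7 : LinearMap.range (μ.left.hom ∘ₗ Finsupp.lsingle (Sum.inl i))
            = LinearMap.range (g i).hom := congrArg LinearMap.range (hlft (Sum.inl i))
        rw [← e7]
        exact le_iSup (fun j => LinearMap.range (μ.left.hom ∘ₗ Finsupp.lsingle j)) (Sum.inl i)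
      · rw [eq_top_iff, ← hr]
        refine sup_le le_sup_left ?_
        refine le_sup_of_le_right ?_
        refine iSup_le fun k => ?_
        rintro y ⟨v, rfl⟩
        refine ⟨Finsupp.single (Sum.inr k) ((0, v) : F.obj A × B), ?_⟩
        have h1 : μ.right.hom (Finsupp.single (Sum.inr k) ((0, v) : F.obj A × B))
            = LinearMap.coprod (commaHom F Z ∘ₗ (F.map 0).hom) (r k).hom
              ((0, v) : F.obj A × B) :=
          LinearMap.congr_fun (hrgt (Sum.inr k)) ((0, v) : F.obj A × B)
        refine h1.trans ?_
        simp
    exact ⟨ι ⊕ κ, commaCofan F A B (ι ⊕ κ), commaCofanIsColimit F A B (ι ⊕ κ), μ, hepi⟩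

theorem mem_Dclass_pairMap_iff {P₁ P₀ : ModuleCat.{u} R} {Q₁ Q₀ : ModuleCat.{u} S}
    (a : P₁ ⟶ P₀) (b : Q₁ ⟶ Q₀) (Z : Comma F (𝟭 (ModuleCat.{u} S))) :
    Z ∈ Dclass (pairMap F a b) ↔ Z.left ∈ Dclass a ∧ Z.right ∈ Dclass b := by
  constructor
  · intro hZ
    constructor
    · intro g
      obtain ⟨H, hH⟩ := hZ (pairHom F Z g 0)
      exact ⟨H.left, congrArg CommaMorphism.left hH⟩
    · intro h
      obtain ⟨H, hH⟩ := hZ (pairHom F Z 0 h)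
      refine ⟨ModuleCat.ofHom (H.right.hom ∘ₗ LinearMap.inr S (F.obj P₀) Q₀), ?_⟩
      apply ModuleCat.hom_ext; apply LinearMap.ext; intro v
      have h1 : H.right.hom ((LinearMap.prodMap (F.map a).hom b.hom) ((0, v) : F.obj P₁ × Q₁))
          = LinearMap.coprod (commaHom F Z ∘ₗ (F.map 0).hom) h.hom
            ((0, v) : F.obj P₁ × Q₁) :=
        LinearMap.congr_fun (congrArg ModuleCat.Hom.hom (congrArg CommaMorphism.right hH))
          ((0, v) : F.obj P₁ × Q₁)
      show H.right.hom ((0, b.hom v) : F.obj P₀ × Q₀) = h.hom v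
      have h2 : ((LinearMap.prodMap (F.map a).hom b.hom) ((0, v) : F.obj P₁ × Q₁))
          = ((0, b.hom v) : F.obj P₀ × Q₀) := by simp
      rw [← h2]
      refine h1.trans ?_
      simp
  · rintro ⟨hX, hY⟩ G
    obtain ⟨f₀, hf₀⟩ := hX G.left
    obtain ⟨h₀, hh₀⟩ := hY (ModuleCat.ofHom (G.right.hom ∘ₗ LinearMap.inr S (F.obj P₁) Q₁))
    refine ⟨{ left := f₀
              right := ModuleCat.ofHom (LinearMap.coprod
                (commaHom F Z ∘ₗ (F.map f₀).hom) h₀.hom)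
              w := ?_ }, ?_⟩
    · apply ModuleCat.hom_ext
      refine LinearMap.ext fun u => ?_
      show commaHom F Z ((F.map f₀).hom u)
        = LinearMap.coprod (commaHom F Z ∘ₗ (F.map f₀).hom) h₀.hom (u, 0)
      simp [commaHom]
      rfl
    · apply CommaMorphism.ext
      · exact hf₀
      · apply ModuleCat.hom_ext; apply LinearMap.ext; rintro ⟨u, v⟩
        have e1 : (F.map f₀).hom ((F.map a).hom u) = (F.map G.left).hom u := by
          have e0 := congrArg F.map hf₀
          rw [F.map_comp] at e0
          exact LinearMap.congr_fun (congrArg ModuleCat.Hom.hom e0) u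
        have e4 : ((u, 0) : F.obj P₁ × Q₁) + (0, v) = (u, v) := by simp
        have k4 : (commaHom F Z ∘ₗ (F.map G.left).hom) u
            = G.right.hom ((u, 0) : F.obj P₁ × Q₁) := comma_hom_w_apply F G u
        have k5 : h₀.hom (b.hom v) = G.right.hom ((0, v) : F.obj P₁ × Q₁) :=
          LinearMap.congr_fun (congrArg ModuleCat.Hom.hom hh₀) v
        have k6 : (commaHom F Z ∘ₗ (F.map f₀).hom) ((F.map a).hom u) + h₀.hom (b.hom v)
            = G.right.hom (u, v) := by
          rw [show (commaHom F Z ∘ₗ (F.map f₀).hom) ((F.map a).hom u)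
              = (commaHom F Z ∘ₗ (F.map G.left).hom) u from congrArg (commaHom F Z) e1]
          rw [k4, k5]
          exact (map_add G.right.hom _ _).symm.trans (congrArg G.right.hom e4)
        exact k6

end

end CommaHelpers


/-- Theorem.  Assume `F` commutes with direct sums.  Then the object
`(A, FA ⊕ B)` with structure map `(1,0) : FA ⟶ FA ⊕ B` (which is isomorphic to
`(A,FA) ⊕ (0,B)`) is silting with respect to the induced projective presentation `σ`
if and only if
(1) `A` is silting with respect to `σ_A`;
(2) `B` is silting with respect to `σ_B`;
(3) `FA ∈ Gen B`. -/
theorem pairObj_silting_iff {R S : Type u} [Ring R] [Ring S]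
    (F : ModuleCat.{u} R ⥤ ModuleCat.{u} S) [F.Additive] [PreservesFiniteColimits F]
    [∀ J : Type u, PreservesColimitsOfShape (Discrete J) F]
    {A : ModuleCat.{u} R} {B : ModuleCat.{u} S}
    (pA : ProjPres A) (pB : ProjPres B) :
    Dclass (pairMap F pA.σ pB.σ) = Gen (pairObj F A B) ↔
      (Dclass pA.σ = Gen A ∧ Dclass pB.σ = Gen B ∧ F.obj A ∈ Gen B) := by
  have hPUS : Subsingleton ↑(ModuleCat.of S PUnit) := inferInstanceAs (Subsingleton PUnit)
  have hPUR : Subsingleton ↑(ModuleCat.of R PUnit) := inferInstanceAs (Subsingleton PUnit)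
  constructor
  · intro E
    have h2 : Dclass pB.σ = Gen B := by
      ext Y
      constructor
      · intro hY
        have hmem : rightObj F Y ∈ Dclass (pairMap F pA.σ pB.σ) :=
          (mem_Dclass_pairMap_iff F pA.σ pB.σ _).mpr
            ⟨subsingleton_mem_Dclass pA.σ _ hPUR, hY⟩
        rw [E] at hmem
        obtain ⟨-, ⟨κ, r, hr⟩⟩ := (mem_gen_pairObj_iff F _).mp hmem
        rw [mem_gen_iff]
        refine ⟨κ, r, ?_⟩
        have h0 : LinearMap.range (commaHom F (rightObj F Y)) = ⊥ :=
          LinearMap.range_zero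
        rw [h0, bot_sup_eq] at hr
        exact hr
      · intro hY
        have hmem : rightObj F Y ∈ Gen (pairObj F A B) := by
          rw [mem_gen_pairObj_iff]
          constructor
          · exact ⟨PUnit, fun _ => 0, submodule_eq_top_of_subsingleton hPUR _⟩
          · obtain ⟨κ, r, hr⟩ := mem_gen_iff.mp hY
            refine ⟨κ, r, ?_⟩
            exact eq_top_iff.mpr (le_sup_of_le_right hr.ge)
        rw [← E] at hmem
        exact ((mem_Dclass_pairMap_iff F pA.σ pB.σ _).mp hmem).2
    have h1 : Dclass pA.σ = Gen A := by
      ext X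
      constructor
      · intro hX
        have hmem : leftObj F X ∈ Dclass (pairMap F pA.σ pB.σ) :=
          (mem_Dclass_pairMap_iff F pA.σ pB.σ _).mpr
            ⟨hX, subsingleton_mem_Dclass pB.σ _ hPUS⟩
        rw [E] at hmem
        obtain ⟨⟨ι, g, hg⟩, -⟩ := (mem_gen_pairObj_iff F _).mp hmem
        exact mem_gen_iff.mpr ⟨ι, g, hg⟩
      · intro hX
        have hmem : diagObj F X ∈ Gen (pairObj F A B) := by
          rw [mem_gen_pairObj_iff]
          obtain ⟨ι, g, hg⟩ := mem_gen_iff.mp hX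
          refine ⟨⟨ι, g, hg⟩, ⟨PUnit, fun _ => 0, ?_⟩⟩
          have h0 : LinearMap.range (commaHom F (diagObj F X)) = ⊤ :=
            LinearMap.range_id
          rw [h0]
          simp
        rw [← E] at hmem
        exact ((mem_Dclass_pairMap_iff F pA.σ pB.σ _).mp hmem).1
    have h3 : F.obj A ∈ Gen B := by
      have hmem : diagObj F A ∈ Gen (pairObj F A B) := by
        rw [mem_gen_pairObj_iff]
        constructor
        · refine ⟨PUnit, fun _ => 𝟙 A, ?_⟩
          refine eq_top_iff.mpr (le_trans ?_ (le_iSup _ PUnit.unit))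
          exact le_of_eq LinearMap.range_id.symm
        · refine ⟨PUnit, fun _ => 0, ?_⟩
          have h0 : LinearMap.range (commaHom F (diagObj F A)) = ⊤ :=
            LinearMap.range_id
          rw [h0]
          simp
      rw [← E] at hmem
      have h4 := ((mem_Dclass_pairMap_iff F pA.σ pB.σ _).mp hmem).2
      rw [h2] at h4
      exact h4
    exact ⟨h1, h2, h3⟩
  · rintro ⟨h1, h2, h3⟩
    ext Z
    constructor
    · intro hZ
      obtain ⟨hX, hY⟩ := (mem_Dclass_pairMap_iff F pA.σ pB.σ _).mp hZ
      rw [h1] at hX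
      rw [h2] at hY
      rw [mem_gen_pairObj_iff]
      obtain ⟨ι, g, hg⟩ := mem_gen_iff.mp hX
      obtain ⟨κ, r, hr⟩ := mem_gen_iff.mp hY
      exact ⟨⟨ι, g, hg⟩, ⟨κ, r, by rw [hr]; simp⟩⟩
    · intro hZ
      obtain ⟨⟨ι, g, hg⟩, ⟨κ, r, hr⟩⟩ := (mem_gen_pairObj_iff F _).mp hZ
      refine (mem_Dclass_pairMap_iff F pA.σ pB.σ _).mpr ⟨?_, ?_⟩
      · rw [h1]
        exact mem_gen_iff.mpr ⟨ι, g, hg⟩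
      · rw [h2, mem_gen_iff]
        obtain ⟨κ', s, hs⟩ := mem_gen_iff.mp h3
        set p : ModuleCat.of R (ι →₀ A) ⟶ Z.left :=
          ModuleCat.ofHom (Finsupp.lsum ℕ (fun i => (g i).hom) : (ι →₀ A) →ₗ[R] Z.left) with hp
        have hpsurj : Function.Surjective p.hom := by
          rw [← LinearMap.range_eq_top]
          rw [show LinearMap.range p.hom = ⨆ i, LinearMap.range (g i).hom from range_lsum _]
          exact hg
        haveI : Epi p := (ModuleCat.epi_iff_surjective p).mpr hpsurj
        have hFpsurj : Function.Surjective (F.map p).hom :=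
          (ModuleCat.epi_iff_surjective (F.map p)).mp inferInstance
        have htopF : ⨆ i : ι, LinearMap.range
            (F.map (g i)).hom = ⊤ := by
          have hFtop : ⨆ i : ι, LinearMap.range
              (F.map ((finsuppCofan ι A).inj i)).hom = ⊤ :=
            iSup_range_cocone_eq_top (F.mapCocone (finsuppCofan ι A))
              (isColimitOfPreserves F (finsuppCofanIsColimit ι A))
              (fun i => F.map ((finsuppCofan ι A).inj i)) (fun i => rfl)
          apply le_antisymm le_top
          calc (⊤ : Submodule S (F.obj Z.left))
              = Submodule.map (F.map p).hom ⊤ := by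
                rw [Submodule.map_top]
                exact (LinearMap.range_eq_top.mpr hFpsurj).symm
            _ = Submodule.map (F.map p).hom
                (⨆ i, LinearMap.range (F.map ((finsuppCofan ι A).inj i)).hom) :=
                  congrArg (Submodule.map (F.map p).hom) hFtop.symm
            _ = ⨆ i, Submodule.map (F.map p).hom
                (LinearMap.range (F.map ((finsuppCofan ι A).inj i)).hom) :=
                Submodule.map_iSup _ _
            _ ≤ ⨆ i, LinearMap.range (F.map (g i)).hom := by
                refine iSup_mono fun i => ?_
                have e50 : (finsuppCofan ι A).inj i ≫ p = g i := by
                  rw [hp]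
                  apply ModuleCat.hom_ext
                  exact Finsupp.lsum_comp_lsingle ℕ _ _
                have e5 : F.map ((finsuppCofan ι A).inj i) ≫ F.map p = F.map (g i) := by
                  exact (F.map_comp _ _).symm.trans (congrArg F.map e50)
                have e6 : Submodule.map (F.map p).hom
                    (LinearMap.range (F.map ((finsuppCofan ι A).inj i)).hom)
                    = LinearMap.range (F.map ((finsuppCofan ι A).inj i) ≫ F.map p).hom :=
                  (LinearMap.range_comp _ _).symm
                rw [e6, e5]
        have perI : ∀ i : ι, LinearMap.range
            (commaHom F Z ∘ₗ (F.map (g i)).hom)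
            = ⨆ k, LinearMap.range
              ((commaHom F Z ∘ₗ (F.map (g i)).hom)
                ∘ₗ (s k).hom) := by
          intro i
          calc LinearMap.range (commaHom F Z
                ∘ₗ (F.map (g i)).hom)
              = Submodule.map (commaHom F Z
                ∘ₗ (F.map (g i)).hom) ⊤ := LinearMap.range_eq_map _
            _ = Submodule.map (commaHom F Z
                ∘ₗ (F.map (g i)).hom)
                (⨆ k, LinearMap.range (s k).hom) := by rw [hs]
            _ = ⨆ k, Submodule.map (commaHom F Z
                ∘ₗ (F.map (g i)).hom)
                (LinearMap.range (s k).hom) := Submodule.map_iSup _ _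
            _ = ⨆ k, LinearMap.range
              ((commaHom F Z
                ∘ₗ (F.map (g i)).hom)
                ∘ₗ (s k).hom) :=
              iSup_congr fun k => (LinearMap.range_comp _ _).symm
        have hrangeZ : LinearMap.range (commaHom F Z)
            = ⨆ i, ⨆ k, LinearMap.range
              ((commaHom F Z
                ∘ₗ (F.map (g i)).hom)
                ∘ₗ (s k).hom) := by
          calc LinearMap.range (commaHom F Z)
              = Submodule.map (commaHom F Z) ⊤ :=
                LinearMap.range_eq_map _
            _ = Submodule.map (commaHom F Z)
                (⨆ i, LinearMap.range (F.map (g i)).hom) := by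
                rw [htopF]
            _ = ⨆ i, Submodule.map (commaHom F Z)
                (LinearMap.range (F.map (g i)).hom) :=
                Submodule.map_iSup _ _
            _ = ⨆ i, LinearMap.range (commaHom F Z
                ∘ₗ (F.map (g i)).hom) :=
                iSup_congr fun i => (LinearMap.range_comp _ _).symm
            _ = ⨆ i, ⨆ k, LinearMap.range
              ((commaHom F Z
                ∘ₗ (F.map (g i)).hom)
                ∘ₗ (s k).hom) := iSup_congr perI
        refine ⟨(ι × κ') ⊕ κ, Sum.elim (fun ik => ModuleCat.ofHom ((commaHom F Z
          ∘ₗ (F.map (g ik.1)).hom) ∘ₗ (s ik.2).hom)) r, ?_⟩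
        rw [iSup_sum]
        simp only [Sum.elim_inl, Sum.elim_inr, ModuleCat.hom_ofHom]
        rw [iSup_prod]
        rw [← hrangeZ]
        exact hr
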